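/- arXiv:1310.5233 — 2 statements merged into one kernel-verified Lean document; each statement's English description precedes it below -/
import Mathlib

section
/- Let $a, b, c, e \ge 0$, $L > 0$ satisfy $b < 1 - L e$ and $a < 1 - L^{-1} c$. Suppose vectors satisfy the cross-form bounds $\|\Delta\theta\| \le b\|\Delta\bar\theta\| + e\|\Delta r\|$ and $\|\Delta\bar r\| \le a\|\Delta r\| + c\|\Delta\bar\theta\|$. If $\|\Delta r\| \le L\|\Delta\theta\|$, then $\|\Delta\theta\| \le \frac{b}{1 - L e}\|\Delta\bar\theta\|$ and $\|\Delta\bar r\| \le \left(\frac{L a b}{1 - L e} + c\right)\|\Delta\bar\theta\|$; in particular the unstable cone $\|\Delta r\| \le L\|\Delta\theta\|$ is mapped into the cone $\|\Delta\bar r\| \le L\|\Delta\bar\theta\|$ and $\|\Delta\bar\theta\| \ge \frac{1 - Le}{b}\|\Delta\theta\|$ with $\frac{1-Le}{b} > 1$. -/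
/-- the unstable cone-field estimates (24)–(25). -/
theorem stmt11 (a b c e L dr dθ dr' dθ' : ℝ)
    (ha0 : 0 ≤ a) (hb0 : 0 < b) (hc0 : 0 ≤ c) (he0 : 0 ≤ e) (hL : 0 < L)
    (h1 : b < 1 - L * e) (h2 : a < 1 - L⁻¹ * c)
    (hdr : 0 ≤ dr) (hdθ : 0 ≤ dθ) (hdr' : 0 ≤ dr') (hdθ' : 0 ≤ dθ')
    (hcross1 : dθ ≤ b * dθ' + e * dr) (hcross2 : dr' ≤ a * dr + c * dθ')
    (hcone : dr ≤ L * dθ) :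
    dθ ≤ b / (1 - L * e) * dθ' ∧
    dr' ≤ (L * a * b / (1 - L * e) + c) * dθ' ∧
    dr' ≤ L * dθ' ∧
    (1 - L * e) / b * dθ ≤ dθ' ∧
    1 < (1 - L * e) / b := by
  have hpos : 0 < 1 - L * e := lt_trans hb0 h1
  have h2' : a * L < L - c := by
    have := mul_lt_mul_of_pos_right h2 hL
    have : a * L < (1 - L⁻¹ * c) * L := this
    calc a * L < (1 - L⁻¹ * c) * L := this
      _ = L - c := by field_simp
  have key : (1 - L * e) * dθ ≤ b * dθ' := by nlinarith
  have hfirst : dθ ≤ b / (1 - L * e) * dθ' := by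
    rw [div_mul_eq_mul_div, le_div_iff₀ hpos]; nlinarith
  refine ⟨hfirst, ?_, ?_, ?_, ?_⟩
  · have : dr' ≤ a * L * dθ + c * dθ' := by nlinarith
    have h3 : a * L * dθ ≤ a * L * (b / (1 - L * e) * dθ') :=
      mul_le_mul_of_nonneg_left hfirst (by positivity)
    calc dr' ≤ a * L * (b / (1 - L * e) * dθ') + c * dθ' := by linarith
      _ = (L * a * b / (1 - L * e) + c) * dθ' := by field_simp
  · have hfrac : b / (1 - L * e) ≤ 1 := by
      rw [div_le_one hpos]; linarith
    have h3 : a * L * dθ ≤ a * L * (b / (1 - L * e) * dθ') :=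
      mul_le_mul_of_nonneg_left hfirst (by positivity)
    have h4 : a * L * (b / (1 - L * e) * dθ') ≤ a * L * dθ' := by
      apply mul_le_mul_of_nonneg_left _ (by positivity)
      nlinarith [div_le_one_of_le₀ (le_of_lt h1) hpos.le]
    nlinarith
  · rw [div_mul_eq_mul_div, div_le_iff₀ hb0]; nlinarith
  · rw [lt_div_iff₀ hb0]; linarith
end

section
/- Let $a, b, c, e \ge 0$, $L > 0$ satisfy $a < 1 - L^{-1} c$ and $b < 1 - L e$. Suppose $\|\Delta\bar r\| \le a\|\Delta r\| + c\|\Delta\bar\theta\|$ and $\|\Delta\theta\| \le b\|\Delta\bar\theta\| + e\|\Delta r\|$. If $\|\Delta\bar\theta\| \le L^{-1}\|\Delta\bar r\|$, then $\|\Delta\bar r\| \le \frac{a}{1 - L^{-1}c}\|\Delta r\|$ and $\|\Delta\theta\| \le \left(\frac{L^{-1} a b}{1 - L^{-1}c} + e\right)\|\Delta r\|$; in particular the stable cone is invariant under the inverse and the inverse expands $\|\Delta r\|$ by a factor at least $\frac{1 - L^{-1}c}{a} > 1$. -/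
/-- the stable cone-field estimates (26)–(27). -/
theorem stmt12 (a b c e L dr dθ dr' dθ' : ℝ)
    (ha0 : 0 < a) (hb0 : 0 ≤ b) (hc0 : 0 ≤ c) (he0 : 0 ≤ e) (hL : 0 < L)
    (h1 : a < 1 - L⁻¹ * c) (h2 : b < 1 - L * e)
    (hdr : 0 ≤ dr) (hdθ : 0 ≤ dθ) (hdr' : 0 ≤ dr') (hdθ' : 0 ≤ dθ')
    (hcross1 : dr' ≤ a * dr + c * dθ') (hcross2 : dθ ≤ b * dθ' + e * dr)
    (hcone : dθ' ≤ L⁻¹ * dr') :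
    dr' ≤ a / (1 - L⁻¹ * c) * dr ∧
    dθ ≤ (L⁻¹ * a * b / (1 - L⁻¹ * c) + e) * dr ∧
    dθ ≤ L⁻¹ * dr ∧
    (1 - L⁻¹ * c) / a * dr' ≤ dr ∧
    1 < (1 - L⁻¹ * c) / a := by
  have hLi : 0 < L⁻¹ := inv_pos.mpr hL
  have hD : 0 < 1 - L⁻¹ * c := lt_trans ha0 h1
  have key : (1 - L⁻¹ * c) * dr' ≤ a * dr := by nlinarith [mul_le_mul_of_nonneg_left hcone hc0]
  have g1 : dr' ≤ a / (1 - L⁻¹ * c) * dr := by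
    rw [div_mul_eq_mul_div, le_div_iff₀ hD]; linarith
  have hfrac : a / (1 - L⁻¹ * c) ≤ 1 := (div_le_one hD).mpr h1.le
  have hθ' : dθ' ≤ L⁻¹ * (a / (1 - L⁻¹ * c) * dr) :=
    hcone.trans (mul_le_mul_of_nonneg_left g1 hLi.le)
  have g2 : dθ ≤ (L⁻¹ * a * b / (1 - L⁻¹ * c) + e) * dr := by
    have : b * dθ' ≤ b * (L⁻¹ * (a / (1 - L⁻¹ * c) * dr)) :=
      mul_le_mul_of_nonneg_left hθ' hb0
    have heq : b * (L⁻¹ * (a / (1 - L⁻¹ * c) * dr)) = (L⁻¹ * a * b / (1 - L⁻¹ * c)) * dr := by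
      ring
    linarith [heq ▸ this]
  have g3 : dθ ≤ L⁻¹ * dr := by
    have hcoef : L⁻¹ * a * b / (1 - L⁻¹ * c) + e ≤ L⁻¹ := by
      have h3 : L⁻¹ * a * b / (1 - L⁻¹ * c) = L⁻¹ * b * (a / (1 - L⁻¹ * c)) := by ring
      have h4 : L⁻¹ * b * (a / (1 - L⁻¹ * c)) ≤ L⁻¹ * b * 1 :=
        mul_le_mul_of_nonneg_left hfrac (by positivity)
      have h5 : L⁻¹ * b ≤ L⁻¹ * (1 - L * e) := mul_le_mul_of_nonneg_left h2.le hLi.le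
      have h6 : L⁻¹ * (1 - L * e) = L⁻¹ - e := by field_simp
      rw [h3]; linarith
    exact g2.trans (mul_le_mul_of_nonneg_right hcoef hdr)
  refine ⟨g1, g2, g3, ?_, (one_lt_div ha0).mpr h1⟩
  rw [div_mul_eq_mul_div, div_le_iff₀ ha0]; nlinarith
end
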